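/- arXiv:2507.14424 — 3 statements merged into one kernel-verified Lean document; each statement's English description precedes it below -/
import Mathlib

section
/- Let S be a Noetherian ring and Q a primary ideal of S whose radical is a principal prime ideal (q) with ⋂_{α ≥ 0} (q^α) = 0. Then Q = (q^α) for some positive integer α; in particular Q is principal. -/
/-- Let `S` be Noetherian and `Q` a primary ideal whose radical is a
principal prime `(q)` with `⋂_{α} (q)^α = 0`. Then `Q = (q)^α` for some `α > 0`; in
particular `Q` is principal. -/
theorem stmt_9 (S : Type) [CommRing S] [IsNoetherianRing S]
    (Q : Ideal S) (hQ : Q.IsPrimary) (q : S)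
    (hrad : Q.radical = Ideal.span {q}) (hprime : (Ideal.span {q} : Ideal S).IsPrime)
    (hint : (⨅ α : ℕ, (Ideal.span {q} : Ideal S) ^ α) = ⊥) :
    (∃ α : ℕ, 0 < α ∧ Q = (Ideal.span {q} : Ideal S) ^ α) ∧ Q.IsPrincipal := by
  classical
  have hQle : Q ≤ Ideal.span {q} := hrad ▸ Ideal.le_radical
  suffices h : ∃ α : ℕ, 0 < α ∧ Q = (Ideal.span {q} : Ideal S) ^ α by
    obtain ⟨α, hα, heq⟩ := h
    refine ⟨⟨α, hα, heq⟩, ?_⟩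
    rw [heq, Ideal.span_singleton_pow]
    exact ⟨⟨q ^ α, rfl⟩⟩
  by_cases hbot : Q = ⊥
  · have hq : q ∈ Q.radical := hrad ▸ Ideal.subset_span rfl
    obtain ⟨n, hn⟩ := hq
    rw [hbot, Ideal.mem_bot] at hn
    have hzero : q ^ (n + 1) = 0 := by rw [pow_succ, hn, zero_mul]
    refine ⟨n + 1, Nat.succ_pos n, ?_⟩
    rw [hbot, Ideal.span_singleton_pow, hzero, Ideal.span_singleton_eq_bot.mpr rfl]
  · have hex : ∃ β, ¬ Q ≤ (Ideal.span {q} : Ideal S) ^ β := by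
      by_contra h
      push_neg at h
      exact hbot (le_antisymm (hint ▸ le_iInf h) bot_le)
    have hβ : ¬ Q ≤ (Ideal.span {q} : Ideal S) ^ (Nat.find hex) := Nat.find_spec hex
    have hβ0 : Nat.find hex ≠ 0 := by
      intro h
      exact hβ (by rw [h, pow_zero, Ideal.one_eq_top]; exact le_top)
    have hβ1 : Nat.find hex ≠ 1 := by
      intro h
      exact hβ (by rw [h, pow_one]; exact hQle)
    obtain ⟨α, hβeq⟩ : ∃ α, Nat.find hex = α + 1 := ⟨Nat.find hex - 1, by omega⟩
    rw [hβeq] at hβ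
    have hαpos : 0 < α := by omega
    have hαle : Q ≤ (Ideal.span {q} : Ideal S) ^ α :=
      not_not.mp (Nat.find_min hex (by omega))
    refine ⟨α, hαpos, le_antisymm hαle ?_⟩
    obtain ⟨x, hxQ, hxn⟩ := SetLike.not_le_iff_exists.mp hβ
    have hxα : x ∈ (Ideal.span {q} : Ideal S) ^ α := hαle hxQ
    rw [Ideal.span_singleton_pow, Ideal.mem_span_singleton] at hxα
    obtain ⟨s, hs⟩ := hxα
    have hsnot : s ∉ Q.radical := by
      intro hsr
      rw [hrad, Ideal.mem_span_singleton] at hsr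
      obtain ⟨t, rfl⟩ := hsr
      apply hxn
      rw [Ideal.span_singleton_pow, Ideal.mem_span_singleton, hs]
      exact ⟨t, by ring⟩
    have hmul : q ^ α * s ∈ Q := hs ▸ hxQ
    have hqα : q ^ α ∈ Q := ((Ideal.isPrimary_iff.mp hQ).2 hmul).resolve_right hsnot
    rw [Ideal.span_singleton_pow, Ideal.span_le]
    simpa using hqα
end

section
/- Let S be a Noetherian ring, I ⊆ S an ideal all of whose associated primes have height one, and suppose S is a local UFD with ⋂_{α≥0} p^α = 0 for each height-one prime p. Then I is a principal ideal. -/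
/-- Let `S` be a Noetherian local UFD in which `⋂_α p^α = 0` for each
height-one prime `p`, and let `I` be an ideal all of whose associated primes have height
one. Then `I` is principal. -/
theorem stmt_11 (S : Type) [CommRing S] [IsDomain S] [UniqueFactorizationMonoid S]
    [IsNoetherianRing S] [IsLocalRing S]
    (hpow : ∀ p : Ideal S, ∀ h : p.IsPrime,
      Order.height (⟨p, h⟩ : PrimeSpectrum S) = 1 → (⨅ α : ℕ, p ^ α) = ⊥)
    (I : Ideal S)
    (hass : ∀ p ∈ associatedPrimes S (S ⧸ I),
      ∃ h : p.IsPrime, Order.height (⟨p, h⟩ : PrimeSpectrum S) = 1) :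
    I.IsPrincipal := by
  clear hpow
  induction I using IsNoetherian.induction with
  | _ I ih =>
  by_cases hbot : I = ⊥
  · exact hbot ▸ ⟨0, (Ideal.span_zero).symm⟩
  by_cases htop : I = ⊤
  · exact htop ▸ ⟨1, by simp [Ideal.span_singleton_one]⟩
  have : Nontrivial (S ⧸ I) := Ideal.Quotient.nontrivial_iff.mpr htop
  obtain ⟨p, hp⟩ := associatedPrimes.nonempty S (S ⧸ I)
  obtain ⟨hprime, hht⟩ := hass p hp
  -- associated primes contain I
  have hIp : I ≤ p := by
    obtain ⟨-, x, rfl⟩ := hp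
    intro a ha
    apply Ideal.le_radical
    rw [Submodule.mem_colon_singleton, Submodule.mem_bot]
    obtain ⟨y, rfl⟩ := Ideal.Quotient.mk_surjective x
    have hmk : a • (Ideal.Quotient.mk I) y = (Ideal.Quotient.mk I) (a * y) := rfl
    rw [hmk]
    exact Ideal.Quotient.eq_zero_iff_mem.2 (Ideal.mul_mem_right y I ha)
  have hpbot : p ≠ ⊥ := fun h => hbot (le_bot_iff.1 (h ▸ hIp))
  obtain ⟨π, hπp, hπ⟩ := hprime.exists_mem_prime_of_ne_bot hpbot
  -- `p` is principal, generated by `π`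
  have hπprime : (Ideal.span {π}).IsPrime := (Ideal.span_singleton_prime hπ.ne_zero).2 hπ
  have hsp : Ideal.span {π} = p := by
    by_contra hne
    have hlt : (⟨Ideal.span {π}, hπprime⟩ : PrimeSpectrum S) < ⟨p, hprime⟩ :=
      lt_of_le_of_ne ((Ideal.span_singleton_le_iff_mem p).2 hπp)
        (fun h => hne (congrArg PrimeSpectrum.asIdeal h))
    have hfin : Order.height (⟨Ideal.span {π}, hπprime⟩ : PrimeSpectrum S) < ⊤ :=
      lt_of_le_of_lt (Order.height_mono hlt.le) (by rw [hht]; exact lt_top_iff_ne_top.mpr (by simp))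
    have h2 := Order.height_strictMono hlt hfin
    rw [hht] at h2
    have h0 : Order.height (⟨Ideal.span {π}, hπprime⟩ : PrimeSpectrum S) = 0 :=
      ENat.lt_one_iff_eq_zero.1 h2
    rw [Order.height_eq_zero] at h0
    have hbotlt : (⟨⊥, Ideal.bot_prime⟩ : PrimeSpectrum S) ≤ ⟨Ideal.span {π}, hπprime⟩ :=
      ((PrimeSpectrum.asIdeal_le_asIdeal _ _).1 bot_le)
    have := h0 hbotlt
    have : Ideal.span {π} ≤ (⊥ : Ideal S) := this
    exact hπ.ne_zero (Ideal.span_singleton_eq_bot.1 (le_bot_iff.1 this))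
  set J : Ideal S := I.colon (Ideal.span {π}) with hJdef
  have hIJ : Ideal.span {π} * J = I := by
    apply le_antisymm
    · rw [Ideal.span_singleton_mul_le_iff]
      intro z hz
      have := Ideal.mem_colon_span_singleton.1 hz
      rwa [mul_comm] at this
    · intro x hx
      have hxp : x ∈ p := hIp hx
      rw [← hsp, Ideal.mem_span_singleton] at hxp
      obtain ⟨y, rfl⟩ := hxp
      exact Ideal.mul_mem_mul (Ideal.mem_span_singleton_self π)
        (Ideal.mem_colon_span_singleton.2 (by rwa [mul_comm]))
  have hIleJ : I ≤ J := fun x hx => Ideal.mem_colon_span_singleton.2 (Ideal.mul_mem_right π I hx)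
  have hJlt : I < J := by
    refine lt_of_le_of_ne hIleJ (fun heq => ?_)
    apply hbot
    refine Submodule.eq_bot_of_le_smul_of_le_jacobson_bot (IsLocalRing.maximalIdeal S) I
      (IsNoetherian.noetherian I) ?_ ?_
    · rw [Ideal.smul_eq_mul]
      rw [← heq] at hIJ
      calc I = Ideal.span {π} * I := hIJ.symm
        _ ≤ IsLocalRing.maximalIdeal S * I :=
          Ideal.mul_mono_left ((Ideal.span_singleton_le_iff_mem _).2
            ((IsLocalRing.mem_maximalIdeal π).2 hπ.not_unit))
    · exact IsLocalRing.maximalIdeal_le_jacobson ⊥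
  -- the injection S⧸J → S⧸I given by multiplication by π
  let f0 : S →ₗ[S] S ⧸ I := (Submodule.mkQ I).comp (LinearMap.lsmul S S π)
  have hker : LinearMap.ker f0 = J := by
    ext x
    simp only [f0, LinearMap.mem_ker, LinearMap.comp_apply, LinearMap.lsmul_apply,
      Submodule.mkQ_apply, Submodule.Quotient.mk_eq_zero, smul_eq_mul]
    rw [hJdef, Ideal.mem_colon_span_singleton, mul_comm]
  let f : (S ⧸ J) →ₗ[S] (S ⧸ I) := Submodule.liftQ J f0 hker.ge
  have hfinj : Function.Injective f :=
    LinearMap.ker_eq_bot.1 (Submodule.ker_liftQ_eq_bot' J f0 hker.symm)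
  have hsub := associatedPrimes.subset_of_injective (f := f) hfinj
  obtain ⟨g, hg⟩ := ih J hJlt (fun q hq => hass q (hsub hq))
  refine ⟨π * g, ?_⟩
  rw [← hIJ, hg, Ideal.submodule_span_eq, Ideal.span_singleton_mul_span_singleton,
    Ideal.submodule_span_eq]
end

section
/- Let R be a Cohen-Macaulay local ring with canonical module and M a finitely generated R-module with FID hull 0 → M → Y' → X' → 0 (Y' of finite injective dimension, X' MCM or zero). If E is the injective hull of M and Ω = E/M the first cosyzygy, then there is a short exact sequence 0 → Y' → X' ⊕ E → Ω → 0. -/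
open CategoryTheory IsLocalRing

noncomputable section

/-- The `n`-th Ext group of two `R`-modules, as an object of `ModuleCat R`. -/
abbrev ExtMod (R : Type) [CommRing R] (n : ℕ) (M N : Type) [AddCommGroup M] [Module R M]
    [AddCommGroup N] [Module R N] : ModuleCat R :=
  ((Ext R (ModuleCat.{0} R) n).obj (Opposite.op (ModuleCat.of R M))).obj (ModuleCat.of R N)

/-- Depth of a module over a local ring, defined as the least `i` such that
`Ext^i(k, M) ≠ 0` where `k` is the residue field. -/
noncomputable def eDepth (R : Type) [CommRing R] [IsLocalRing R]
    (M : Type) [AddCommGroup M] [Module R M] : ℕ∞ :=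
  sInf {n : ℕ∞ | ∃ i : ℕ, n = i ∧ Nontrivial (ExtMod R i (ResidueField R) M)}

/-- Krull dimension of a module: the Krull dimension of its support. -/
noncomputable def mDim (R : Type) [CommRing R] (M : Type) [AddCommGroup M] [Module R M] :
    WithBot ℕ∞ :=
  Order.krullDim (Module.support R M)

/-- `N` has finite injective dimension over `R`: for some `n`, `Ext^i(-, N) = 0` for all `i > n`. -/
def HasFID (R : Type) [CommRing R] (N : Type) [AddCommGroup N] [Module R N] : Prop :=
  ∃ n : ℕ, ∀ i : ℕ, n < i → ∀ M : ModuleCat.{0} R, Subsingleton (ExtMod R i M N)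

/-- A maximal Cohen-Macaulay module: finitely generated with depth equal to `dim R`. -/
def IsMCM (R : Type) [CommRing R] [IsLocalRing R] (M : Type) [AddCommGroup M] [Module R M] :
    Prop :=
  Module.Finite R M ∧ (eDepth R M : WithBot ℕ∞) = ringKrullDim R

/-- `ω` is a canonical module of the Cohen-Macaulay local ring `R`: it is MCM, of finite
injective dimension, and of type one (`Ext^d(k, ω) ≅ k`). -/
def IsCanonicalModule (R : Type) [CommRing R] [IsLocalRing R] (ω : Type) [AddCommGroup ω]
    [Module R ω] : Prop :=
  IsMCM R ω ∧ HasFID R ω ∧ ∃ d : ℕ, ringKrullDim R = d ∧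
    Nonempty ((ExtMod R d (ResidueField R) ω) ≃ₗ[R] ResidueField R)

/-- A (Noetherian) local ring is Gorenstein if it has finite injective dimension over itself. -/
def IsGorensteinLocalRing (A : Type) [CommRing A] : Prop :=
  IsNoetherianRing A ∧ IsLocalRing A ∧ HasFID A A

/-- `R` is generically Gorenstein: the localization at each minimal prime is Gorenstein. -/
def GenericallyGorenstein (R : Type) [CommRing R] : Prop :=
  ∀ p ∈ minimalPrimes R, ∀ hp : p.IsPrime,
    haveI := hp; IsGorensteinLocalRing (Localization p.primeCompl)

/-- Height of an ideal: the infimum of heights of primes containing it. -/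
noncomputable def idealHeight (R : Type) [CommRing R] (I : Ideal R) : ℕ∞ :=
  ⨅ p ∈ {p : PrimeSpectrum R | I ≤ p.asIdeal}, Order.height p


/-- Let `R` be Cohen-Macaulay local with canonical module, `M` finitely
generated with FID hull `0 → M → Y' → X' → 0`, `E` the injective hull of `M`, and
`Ω = E/M` the first cosyzygy. Then there is a short exact sequence
`0 → Y' → X' ⊕ E → Ω → 0`. -/
theorem stmt_15 (R : Type) [CommRing R] [IsLocalRing R] [IsNoetherianRing R]
    (hCM : (eDepth R R : WithBot ℕ∞) = ringKrullDim R)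
    (hω : ∃ ω : ModuleCat.{0} R, Module.Finite R ω ∧ IsCanonicalModule R ω)
    (M Y' X' : Type) [AddCommGroup M] [Module R M] [AddCommGroup Y'] [Module R Y']
    [AddCommGroup X'] [Module R X'] [Module.Finite R M]
    (ι : M →ₗ[R] Y') (π : Y' →ₗ[R] X')
    (hι : Function.Injective ι) (hπ : Function.Surjective π)
    (hexact : LinearMap.range ι = LinearMap.ker π)
    (hY' : HasFID R Y') (hX' : IsMCM R X' ∨ Subsingleton X')
    (E : Type) [AddCommGroup E] [Module R E] [Module.Injective R E]
    (e : M →ₗ[R] E) (he : Function.Injective e)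
    (hess : ∀ P : Submodule R E, P ≠ ⊥ → P ⊓ LinearMap.range e ≠ ⊥) :
    ∃ (f : Y' →ₗ[R] (X' × E)) (g : (X' × E) →ₗ[R] (E ⧸ LinearMap.range e)),
      Function.Injective f ∧ Function.Surjective g ∧
      LinearMap.range f = LinearMap.ker g :=  by
  obtain ⟨φ, hφ⟩ := Module.Injective.out ι hι e
  set q : E →ₗ[R] (E ⧸ LinearMap.range e) := (LinearMap.range e).mkQ with hq
  have hker : LinearMap.ker π ≤ LinearMap.ker (q ∘ₗ φ) := by
    rw [← hexact]
    rintro _ ⟨m, rfl⟩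
    simp [hφ m, q]
  set ev : (Y' ⧸ LinearMap.ker π) ≃ₗ[R] X' := π.quotKerEquivOfSurjective hπ with hev
  set ψ : X' →ₗ[R] (E ⧸ LinearMap.range e) :=
    ((LinearMap.ker π).liftQ (q ∘ₗ φ) hker) ∘ₗ ev.symm.toLinearMap with hψ
  have hψπ : ∀ y : Y', ψ (π y) = q (φ y) := by
    intro y
    have h1 : ev.symm (π y) = Submodule.Quotient.mk y := by
      apply ev.injective
      simp [hev, LinearMap.quotKerEquivOfSurjective]
    simp [hψ, h1]
  refine ⟨LinearMap.prod π φ, (ψ ∘ₗ LinearMap.fst R X' E) - (q ∘ₗ LinearMap.snd R X' E), ?_, ?_, ?_⟩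
  · rw [← LinearMap.ker_eq_bot, LinearMap.ker_eq_bot']
    intro y hy
    have h1 : π y = 0 := congrArg Prod.fst hy
    have h2 : φ y = 0 := congrArg Prod.snd hy
    have : y ∈ LinearMap.range ι := by rw [hexact]; exact h1
    obtain ⟨m, rfl⟩ := this
    have : e m = 0 := by rw [← hφ m]; exact h2
    rw [show m = 0 from he (by simpa using this)]
    simp
  · intro z
    obtain ⟨z', rfl⟩ := Submodule.mkQ_surjective _ z
    exact ⟨(0, -z'), by simp [q]⟩
  · apply le_antisymm
    · rintro _ ⟨y, rfl⟩
      simp [hψπ y]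
    · rintro ⟨x, z⟩ hxz
      simp only [LinearMap.mem_ker, LinearMap.sub_apply, LinearMap.comp_apply,
        LinearMap.fst_apply, LinearMap.snd_apply, sub_eq_zero] at hxz
      obtain ⟨y, rfl⟩ := hπ x
      rw [hψπ y] at hxz
      have : z - φ y ∈ LinearMap.range e := by
        rw [← Submodule.Quotient.mk_eq_zero]
        have : q (z - φ y) = 0 := by rw [map_sub, ← hxz, sub_self]
        simpa [q] using this
      obtain ⟨m, hm⟩ := this
      refine ⟨y + ι m, ?_⟩
      have hπι : π (ι m) = 0 := by
        rw [← LinearMap.mem_ker, ← hexact]; exact ⟨m, rfl⟩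
      simp [LinearMap.prod_apply, hπι, hφ m, hm]
end
end
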